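/- For every family F of finite subsets of ℕ, every infinite subset M of ℕ, and every natural number k, there exists an infinite subset L of M such that either every k-element subset of L belongs to F, or no k-element subset of L belongs to F. -/
import Mathlib


/-- Ramsey's classical partition theorem: for any family `F` of finite subsets of `ℕ`, any
infinite `M ⊆ ℕ` and any `k`, there is an infinite `L ⊆ M` with either all `k`-element subsets
of `L` in `F` or none of them in `F`. -/
theorem ramsey_classical (F : Set (Finset ℕ)) (M : Set ℕ) (hM : M.Infinite) (k : ℕ) :
    ∃ L ⊆ M, L.Infinite ∧
      ((∀ s : Finset ℕ, ↑s ⊆ L → s.card = k → s ∈ F) ∨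
       (∀ s : Finset ℕ, ↑s ⊆ L → s.card = k → s ∉ F)) := by
  induction k generalizing F M with
  | zero =>
    refine ⟨M, le_refl _, hM, ?_⟩
    by_cases h0 : (∅ : Finset ℕ) ∈ F
    · left; intro s _ hs; rwa [Finset.card_eq_zero.mp hs]
    · right; intro s _ hs; rwa [Finset.card_eq_zero.mp hs]
  | succ k IH =>
    -- one-step lemma
    have step : ∀ N : Set ℕ, N.Infinite → ∃ a, ∃ N' : Set ℕ, ∃ c : Bool,
        a ∈ N ∧ N' ⊆ N ∧ N'.Infinite ∧ (∀ x ∈ N', a < x) ∧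
        ∀ s : Finset ℕ, ↑s ⊆ N' → s.card = k → (insert a s ∈ F ↔ c = true) := by
      intro N hN
      obtain ⟨a, ha⟩ := hN.nonempty
      have hN1 : (N \ Set.Iic a).Infinite := hN.diff (Set.finite_Iic a)
      obtain ⟨L, hLsub, hLinf, hdich⟩ := IH {t : Finset ℕ | insert a t ∈ F} _ hN1
      have hLN : L ⊆ N := hLsub.trans Set.diff_subset
      have hlt : ∀ x ∈ L, a < x := by
        intro x hx
        have := (hLsub hx).2
        simpa using this
      cases hdich with
      | inl h =>
        exact ⟨a, L, true, ha, hLN, hLinf, hlt,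
          fun s hs hc => by simpa using h s hs hc⟩
      | inr h =>
        exact ⟨a, L, false, ha, hLN, hLinf, hlt,
          fun s hs hc => by simpa using h s hs hc⟩
    choose! A Nf C h1 h2 h3 h4 h5 using step
    -- iterate
    let Ns : ℕ → Set ℕ := fun n => Nat.rec M (fun _ prev => Nf prev) n
    have hNs0 : Ns 0 = M := rfl
    have hNsS : ∀ n, Ns (n + 1) = Nf (Ns n) := fun n => rfl
    have hinf : ∀ n, (Ns n).Infinite := by
      intro n; induction n with
      | zero => exact hM
      | succ n ih => exact h3 _ ih
    set a : ℕ → ℕ := fun n => A (Ns n) with ha_def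
    set c : ℕ → Bool := fun n => C (Ns n) with hc_def
    have hmem : ∀ n, a n ∈ Ns n := fun n => h1 _ (hinf n)
    have hsub : ∀ n, Ns (n + 1) ⊆ Ns n := fun n => h2 _ (hinf n)
    have hchain : ∀ m n, m ≤ n → Ns n ⊆ Ns m := by
      intro m n hmn
      induction n with
      | zero => cases Nat.le_zero.mp hmn; exact le_refl _
      | succ n ih =>
        rcases Nat.lt_or_ge m (n + 1) with h | h
        · exact (hsub n).trans (ih (Nat.lt_succ_iff.mp h))
        · have : m = n + 1 := le_antisymm hmn h
          subst this; exact le_refl _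
    have hlt : ∀ n, ∀ x ∈ Ns (n + 1), a n < x := fun n => h4 _ (hinf n)
    have hamono : StrictMono a := by
      apply strictMono_nat_of_lt_succ
      intro n
      exact hlt n _ (hmem (n + 1))
    have hcolor : ∀ n, ∀ s : Finset ℕ, ↑s ⊆ Ns (n + 1) → s.card = k →
        (insert (a n) s ∈ F ↔ c n = true) := fun n => h5 _ (hinf n)
    -- pigeonhole on colors
    have : {n | c n = true}.Infinite ∨ {n | c n = false}.Infinite := by
      rw [← Set.infinite_union]
      have : {n | c n = true} ∪ {n | c n = false} = Set.univ := by
        ext n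
        cases hcn : c n <;> simp [hcn]
      rw [this]; exact Set.infinite_univ
    obtain ⟨c0, I, hIinf, hIc⟩ : ∃ c0 : Bool, ∃ I : Set ℕ, I.Infinite ∧ ∀ n ∈ I, c n = c0 := by
      cases this with
      | inl h => exact ⟨true, _, h, fun n hn => hn⟩
      | inr h => exact ⟨false, _, h, fun n hn => hn⟩
    refine ⟨a '' I, ?_, hIinf.image (hamono.injective.injOn), ?_⟩
    · rintro x ⟨n, _, rfl⟩
      exact hchain 0 n (Nat.zero_le n) (hmem n)
    -- key claim
    have key : ∀ s : Finset ℕ, ↑s ⊆ a '' I → s.card = k + 1 → (s ∈ F ↔ c0 = true) := by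
      intro s hsL hsc
      have hsne : s.Nonempty := Finset.card_pos.mp (by omega)
      obtain ⟨n, hnI, han⟩ := hsL (s.min'_mem hsne)
      set t := s.erase (s.min' hsne) with ht_def
      have htc : t.card = k := by
        rw [ht_def, Finset.card_erase_of_mem (s.min'_mem hsne), hsc]; omega
      have htsub : ↑t ⊆ Ns (n + 1) := by
        intro x hx
        rw [ht_def] at hx
        simp only [Finset.coe_erase, Set.mem_diff, Set.mem_singleton_iff] at hx
        obtain ⟨hxs, hxne⟩ := hx
        obtain ⟨m, hmI, ham⟩ := hsL hxs
        have hminlt : a n < x := by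
          rw [han]; exact lt_of_le_of_ne (s.min'_le x hxs) (Ne.symm hxne)
        have : n < m := by
          rw [← ham] at hminlt; exact hamono.lt_iff_lt.mp hminlt
        exact hchain (n + 1) m this (ham ▸ hmem m)
      have hmin_notin : a n ∉ t := by
        rw [ht_def, han]; exact Finset.notMem_erase _ _
      have hins : insert (a n) t = s := by
        rw [ht_def, han]; exact Finset.insert_erase (s.min'_mem hsne)
      rw [← hins]
      rw [hcolor n t htsub htc, hIc n hnI]
    cases hc0 : c0 with
    | true =>
      left; intro s hs hsc
      exact (key s hs hsc).mpr (by rw [hc0])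
    | false =>
      right; intro s hs hsc hsF
      have := (key s hs hsc).mp hsF
      rw [hc0] at this; exact Bool.noConfusion this
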